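/- Let n ≥ 3, 0 < m < (n-2)/n, α, β real with β < 0 and α = βγ for some γ. Suppose f : (0,∞) → (0,∞) is a C² function. Define g : (0,∞) → ℝ by g(r) = r^{-(n-2)/m} f(1/r). Then f is a radially symmetric solution of Δf^m + αf + βx·∇f = 0 on ℝⁿ\{0} (i.e., (f^m)'' + ((n-1)/r)(f^m)' + αf + βr f' = 0 on (0,∞)) if and only if g satisfies (g^m)'' + ((n-1)/r)(g^m)' + r^{(n-2-nm)/m - 2}(α̃ g + β̃ r g') = 0 on (0,∞), where β̃ = -β and α̃ = α - ((n-2)/m)β. -/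

import Mathlib

open Set

private lemma key_id (n : ℕ) (m α β α' β' : ℝ) (hm0 : 0 < m)
    (hα' : α' = α - (((n : ℝ) - 2) / m) * β) (hβ' : β' = -β)
    (f g : ℝ → ℝ) (hfpos : ∀ r ∈ Ioi (0 : ℝ), 0 < f r)
    (hf : ContDiffOn ℝ 2 f (Ioi 0))
    (hg : ∀ r ∈ Ioi (0 : ℝ), g r = r ^ (-(((n : ℝ) - 2) / m)) * f (1 / r))
    (r : ℝ) (hr : 0 < r) :
    deriv (deriv (fun s => g s ^ m)) r + (((n : ℝ) - 1) / r) * deriv (fun s => g s ^ m) r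
      + r ^ (((n : ℝ) - 2 - n * m) / m - 2) * (α' * g r + β' * r * deriv g r)
    = r ^ (-(n : ℝ) - 2) *
      (deriv (deriv (fun s => f s ^ m)) (1 / r)
        + (((n : ℝ) - 1) / (1 / r)) * deriv (fun s => f s ^ m) (1 / r)
        + α * f (1 / r) + β * (1 / r) * deriv f (1 / r)) := by
  have hm := hm0.ne'
  have hinvmem : ∀ x : ℝ, 0 < x → 1/x ∈ Ioi (0:ℝ) := fun x hx => mem_Ioi.mpr (by positivity)
  have hy : (1:ℝ)/r ∈ Ioi (0:ℝ) := hinvmem r hr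
  have hfy : 0 < f (1/r) := hfpos _ hy
  have hdf : ∀ x ∈ Ioi (0:ℝ), HasDerivAt f (deriv f x) x := fun x hx =>
    ((hf.differentiableOn two_ne_zero).differentiableAt (isOpen_Ioi.mem_nhds hx)).hasDerivAt
  have hdf2 : ∀ x ∈ Ioi (0:ℝ), HasDerivAt (deriv f) (deriv (deriv f) x) x := fun x hx =>
    (((hf.deriv_of_isOpen (m := 1) isOpen_Ioi (by norm_num)).differentiableOn one_ne_zero).differentiableAt
      (isOpen_Ioi.mem_nhds hx)).hasDerivAt
  have hF : ∀ x ∈ Ioi (0:ℝ), HasDerivAt (fun s => f s ^ m) (deriv f x * m * f x ^ (m-1)) x :=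
    fun x hx => (hdf x hx).rpow_const (Or.inl (hfpos x hx).ne')
  have hFd : ∀ x ∈ Ioi (0:ℝ), deriv (fun s => f s ^ m) x = deriv f x * m * f x ^ (m-1) :=
    fun x hx => (hF x hx).deriv
  have hF2 : ∀ x ∈ Ioi (0:ℝ), HasDerivAt (fun s => deriv f s * m * f s ^ (m-1))
      (deriv (deriv f) x * m * f x ^ (m-1)
        + deriv f x * m * (deriv f x * (m-1) * f x ^ (m-1-1))) x :=
    fun x hx => ((hdf2 x hx).mul_const m).mul
      ((hdf x hx).rpow_const (Or.inl (hfpos x hx).ne'))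
  have hFdd : ∀ x ∈ Ioi (0:ℝ), deriv (deriv (fun s => f s ^ m)) x
      = deriv (deriv f) x * m * f x ^ (m-1)
        + deriv f x * m * (deriv f x * (m-1) * f x ^ (m-1-1)) := by
    intro x hx
    have hev : deriv (fun s => f s ^ m) =ᶠ[nhds x] fun s => deriv f s * m * f s ^ (m-1) := by
      filter_upwards [isOpen_Ioi.mem_nhds hx] with s hs using hFd s hs
    rw [hev.deriv_eq]
    exact (hF2 x hx).deriv
  have hinv : ∀ x : ℝ, 0 < x → HasDerivAt (fun s : ℝ => 1/s) (-(x^2)⁻¹) x := fun x hx => by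
    simpa [one_div] using hasDerivAt_inv hx.ne'
  -- deriv of g
  have hφ : ∀ x ∈ Ioi (0:ℝ), HasDerivAt (fun s : ℝ => s ^ (-(((n:ℝ)-2)/m)) * f (1/s))
      ((-(((n:ℝ)-2)/m)) * x ^ (-(((n:ℝ)-2)/m) - 1) * f (1/x)
        + x ^ (-(((n:ℝ)-2)/m)) * (deriv f (1/x) * -(x^2)⁻¹)) x := fun x hx =>
    (Real.hasDerivAt_rpow_const (Or.inl hx.ne')).mul
      ((hdf _ (hinvmem x hx)).comp x (hinv x hx))
  have hgd : ∀ x ∈ Ioi (0:ℝ), deriv g x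
      = (-(((n:ℝ)-2)/m)) * x ^ (-(((n:ℝ)-2)/m) - 1) * f (1/x)
        + x ^ (-(((n:ℝ)-2)/m)) * (deriv f (1/x) * -(x^2)⁻¹) := by
    intro x hx
    have hev : g =ᶠ[nhds x] fun s : ℝ => s ^ (-(((n:ℝ)-2)/m)) * f (1/s) := by
      filter_upwards [isOpen_Ioi.mem_nhds hx] with s hs using hg s hs
    rw [hev.deriv_eq]
    exact (hφ x hx).deriv
  -- g^m = ψ
  have hGeq : ∀ x ∈ Ioi (0:ℝ), g x ^ m = x ^ (-((n:ℝ)-2)) * f (1/x) ^ m := by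
    intro x hx
    have he : (-(((n:ℝ)-2)/m)) * m = -((n:ℝ)-2) := by field_simp
    rw [hg x hx, Real.mul_rpow (Real.rpow_nonneg hx.le _) (hfpos _ (hinvmem x hx)).le,
      ← Real.rpow_mul hx.le, he]
  have hψ : ∀ x ∈ Ioi (0:ℝ), HasDerivAt (fun s : ℝ => s ^ (-((n:ℝ)-2)) * f (1/s) ^ m)
      ((-((n:ℝ)-2)) * x ^ (-((n:ℝ)-2) - 1) * f (1/x) ^ m
        + x ^ (-((n:ℝ)-2)) * (deriv f (1/x) * m * f (1/x) ^ (m-1) * -(x^2)⁻¹)) x :=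
    fun x hx => (Real.hasDerivAt_rpow_const (Or.inl hx.ne')).mul
      ((hF _ (hinvmem x hx)).comp x (hinv x hx))
  have hGd : ∀ x ∈ Ioi (0:ℝ), deriv (fun s => g s ^ m) x
      = (-((n:ℝ)-2)) * x ^ (-((n:ℝ)-2) - 1) * f (1/x) ^ m
        + x ^ (-((n:ℝ)-2)) * (deriv f (1/x) * m * f (1/x) ^ (m-1) * -(x^2)⁻¹) := by
    intro x hx
    have hev : (fun s => g s ^ m) =ᶠ[nhds x] fun s : ℝ => s ^ (-((n:ℝ)-2)) * f (1/s) ^ m := by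
      filter_upwards [isOpen_Ioi.mem_nhds hx] with s hs using hGeq s hs
    rw [hev.deriv_eq]
    exact (hψ x hx).deriv
  -- second derivative of g^m at r
  have t1 : HasDerivAt (fun x : ℝ => (-((n:ℝ)-2)) * x ^ (-((n:ℝ)-2) - 1))
      ((-((n:ℝ)-2)) * ((-((n:ℝ)-2) - 1) * r ^ (-((n:ℝ)-2) - 1 - 1))) r :=
    (Real.hasDerivAt_rpow_const (Or.inl hr.ne')).const_mul (-((n:ℝ)-2))
  have t2 : HasDerivAt (fun x : ℝ => f (1/x) ^ m)
      (deriv f (1/r) * m * f (1/r) ^ (m-1) * -(r^2)⁻¹) r :=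
    (hF _ hy).comp r (hinv r hr)
  have t3 : HasDerivAt (fun x : ℝ => x ^ (-((n:ℝ)-2)))
      ((-((n:ℝ)-2)) * r ^ (-((n:ℝ)-2) - 1)) r :=
    Real.hasDerivAt_rpow_const (Or.inl hr.ne')
  have t4 : HasDerivAt (fun x : ℝ => deriv f (1/x) * m * f (1/x) ^ (m-1))
      ((deriv (deriv f) (1/r) * m * f (1/r) ^ (m-1)
        + deriv f (1/r) * m * (deriv f (1/r) * (m-1) * f (1/r) ^ (m-1-1))) * -(r^2)⁻¹) r :=
    (hF2 _ hy).comp r (hinv r hr)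
  have t5 : HasDerivAt (fun x : ℝ => -(x^2)⁻¹) (2 / r^3) r := by
    have h := ((hasDerivAt_pow 2 r).inv (pow_ne_zero 2 hr.ne')).neg
    refine h.congr_deriv ?_
    field_simp
    ring
  have hGdd : deriv (deriv (fun s => g s ^ m)) r
      = ((-((n:ℝ)-2)) * ((-((n:ℝ)-2) - 1) * r ^ (-((n:ℝ)-2) - 1 - 1))) * f (1/r) ^ m
          + ((-((n:ℝ)-2)) * r ^ (-((n:ℝ)-2) - 1))
            * (deriv f (1/r) * m * f (1/r) ^ (m-1) * -(r^2)⁻¹)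
        + (((-((n:ℝ)-2)) * r ^ (-((n:ℝ)-2) - 1))
            * (deriv f (1/r) * m * f (1/r) ^ (m-1) * -(r^2)⁻¹)
          + r ^ (-((n:ℝ)-2))
            * ((deriv (deriv f) (1/r) * m * f (1/r) ^ (m-1)
                + deriv f (1/r) * m * (deriv f (1/r) * (m-1) * f (1/r) ^ (m-1-1))) * -(r^2)⁻¹
                * -(r^2)⁻¹
              + deriv f (1/r) * m * f (1/r) ^ (m-1) * (2 / r^3))) := by
    have hev : deriv (fun s => g s ^ m) =ᶠ[nhds r]
        fun x : ℝ => (-((n:ℝ)-2)) * x ^ (-((n:ℝ)-2) - 1) * f (1/x) ^ m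
          + x ^ (-((n:ℝ)-2)) * (deriv f (1/x) * m * f (1/x) ^ (m-1) * -(x^2)⁻¹) := by
      filter_upwards [isOpen_Ioi.mem_nhds (mem_Ioi.mpr hr)] with s hs using hGd s hs
    rw [hev.deriv_eq]
    exact ((t1.mul t2).add (t3.mul (t4.mul t5))).deriv
  -- substitute everything
  rw [hGdd, hGd r (mem_Ioi.mpr hr), hgd r (mem_Ioi.mpr hr), hg r (mem_Ioi.mpr hr),
    hFdd _ hy, hFd _ hy, hα', hβ']
  -- power rewrites
  have p1 : r ^ (-((n:ℝ)-2) - 1) = r ^ (-((n:ℝ)-2)) * r⁻¹ := by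
    rw [Real.rpow_sub hr, Real.rpow_one, div_eq_mul_inv]
  have p2 : r ^ (-((n:ℝ)-2) - 1 - 1) = r ^ (-((n:ℝ)-2)) * r⁻¹ * r⁻¹ := by
    rw [Real.rpow_sub hr, Real.rpow_one, Real.rpow_sub hr, Real.rpow_one]
    field_simp
  have p3 : r ^ (-(((n:ℝ)-2)/m) - 1) = r ^ (-(((n:ℝ)-2)/m)) * r⁻¹ := by
    rw [Real.rpow_sub hr, Real.rpow_one, div_eq_mul_inv]
  have p4 : r ^ (((n:ℝ) - 2 - n * m) / m - 2)
      = r ^ (-((n:ℝ)-2)) * r⁻¹ * r⁻¹ * r⁻¹ * r⁻¹ * r ^ ((((n:ℝ)-2))/m) := by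
    have he : ((n:ℝ) - 2 - n * m) / m - 2
        = (-((n:ℝ)-2)) + (-1) + (-1) + (-1) + (-1) + (((n:ℝ)-2)/m) := by
      field_simp; ring
    rw [he, Real.rpow_add hr, Real.rpow_add hr, Real.rpow_add hr, Real.rpow_add hr,
      Real.rpow_add hr, Real.rpow_neg_one]
  have p5 : r ^ (-(n:ℝ) - 2) = r ^ (-((n:ℝ)-2)) * r⁻¹ * r⁻¹ * r⁻¹ * r⁻¹ := by
    have he : -(n:ℝ) - 2 = (-((n:ℝ)-2)) + (-1) + (-1) + (-1) + (-1) := by ring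
    rw [he, Real.rpow_add hr, Real.rpow_add hr, Real.rpow_add hr, Real.rpow_add hr,
      Real.rpow_neg_one]
  have q1 : f (1/r) ^ (m-1) = f (1/r) ^ m * (f (1/r))⁻¹ := by
    rw [Real.rpow_sub hfy, Real.rpow_one, div_eq_mul_inv]
  have q2 : f (1/r) ^ (m-1-1) = f (1/r) ^ m * (f (1/r))⁻¹ * (f (1/r))⁻¹ := by
    rw [Real.rpow_sub hfy, Real.rpow_one, Real.rpow_sub hfy, Real.rpow_one]
    field_simp
  have pk : r ^ (-(((n:ℝ)-2)/m)) = (r ^ ((((n:ℝ)-2))/m))⁻¹ := Real.rpow_neg hr.le _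
  rw [p2, p1, p3, p4, p5, q2, q1, pk]
  have hA : (0:ℝ) < r ^ (-((n:ℝ)-2)) := Real.rpow_pos_of_pos hr _
  have hK : (0:ℝ) < r ^ ((((n:ℝ)-2))/m) := Real.rpow_pos_of_pos hr _
  set A := r ^ (-((n:ℝ)-2)) with hAdef
  set K := r ^ ((((n:ℝ)-2))/m) with hKdef
  set F := f (1/r) ^ m with hFdef
  field_simp
  ring

theorem stmt_6 (n : ℕ) (hn : 3 ≤ n) (m α β γ α' β' : ℝ)
    (hm0 : 0 < m) (hm1 : m < ((n : ℝ) - 2) / n)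
    (hβ : β < 0) (hαβ : α = β * γ)
    (hα' : α' = α - (((n : ℝ) - 2) / m) * β) (hβ' : β' = -β)
    (f g : ℝ → ℝ) (hfpos : ∀ r ∈ Ioi (0 : ℝ), 0 < f r)
    (hf : ContDiffOn ℝ 2 f (Ioi 0))
    (hg : ∀ r ∈ Ioi (0 : ℝ), g r = r ^ (-(((n : ℝ) - 2) / m)) * f (1 / r)) :
    (∀ r ∈ Ioi (0 : ℝ),
        deriv (deriv (fun s => f s ^ m)) r + (((n : ℝ) - 1) / r) * deriv (fun s => f s ^ m) r
          + α * f r + β * r * deriv f r = 0) ↔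
      (∀ r ∈ Ioi (0 : ℝ),
        deriv (deriv (fun s => g s ^ m)) r + (((n : ℝ) - 1) / r) * deriv (fun s => g s ^ m) r
          + r ^ (((n : ℝ) - 2 - n * m) / m - 2) * (α' * g r + β' * r * deriv g r) = 0) := by
  constructor
  · intro H r hr
    have hr' : (0:ℝ) < r := hr
    rw [key_id n m α β α' β' hm0 hα' hβ' f g hfpos hf hg r hr',
      H (1/r) (mem_Ioi.mpr (by positivity)), mul_zero]
  · intro H s hs
    have hs' : (0:ℝ) < s := hs
    have key := key_id n m α β α' β' hm0 hα' hβ' f g hfpos hf hg (1/s) (by positivity)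
    rw [one_div_one_div] at key
    rw [H (1/s) (mem_Ioi.mpr (by positivity))] at key
    have hpos : (0:ℝ) < (1/s) ^ (-(n:ℝ) - 2) := Real.rpow_pos_of_pos (by positivity) _
    have := (mul_eq_zero.mp key.symm).resolve_left hpos.ne'
    exact this
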